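/- Let ℓ = e^{2πi/3} ∈ ℂ, and let t and r denote the images in PSL(2, ℂ) of the matrices [[1, 1], [0, 1]] and [[ℓ, 0], [0, ℓ⁻¹]] respectively. Then the abelianization of the subgroup of PSL(2, ℂ) generated by t and r is isomorphic to ℤ/3ℤ × ℤ/3ℤ. -/

import Mathlib

open scoped MatrixGroups



set_option linter.unusedTactic false

namespace Stmt9

def rhoc (c : ZMod 3) (v : ℤ × ℤ) : ℤ × ℤ :=
  if c = 0 then v else if c = 1 then (v.2 - v.1, -v.1) else (-v.2, v.1 - v.2)

lemma zmod3_cases (c : ZMod 3) : c = 0 ∨ c = 1 ∨ c = 2 := by revert c; decide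

lemma rhoc_add_val (a b : ZMod 3) (v : ℤ × ℤ) :
    rhoc (a + b) v = rhoc a (rhoc b v) := by
  rcases zmod3_cases a with rfl | rfl | rfl <;> rcases zmod3_cases b with rfl | rfl | rfl <;>
    simp (config := { decide := true }) only [rhoc] <;> norm_num [Prod.ext_iff] <;>
    (try constructor) <;> ring

lemma rhoc_vadd (c : ZMod 3) (v w : ℤ × ℤ) :
    rhoc c (v + w) = rhoc c v + rhoc c w := by
  rcases zmod3_cases c with rfl | rfl | rfl <;>
    simp (config := { decide := true }) only [rhoc] <;> norm_num [Prod.ext_iff] <;>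
    (try constructor) <;> ring

lemma rhoc_zero_vec (c : ZMod 3) : rhoc c 0 = 0 := by
  rcases zmod3_cases c with rfl | rfl | rfl <;>
    simp (config := { decide := true }) only [rhoc] <;> norm_num [Prod.ext_iff]

lemma rhoc_zero (v : ℤ × ℤ) : rhoc 0 v = v := rfl

@[ext]
structure K where
  v : ℤ × ℤ
  c : ZMod 3
deriving DecidableEq

instance : Mul K := ⟨fun x y => ⟨x.v + rhoc x.c y.v, x.c + y.c⟩⟩
instance : One K := ⟨⟨0, 0⟩⟩
instance : Inv K := ⟨fun x => ⟨-(rhoc (-x.c) x.v), -x.c⟩⟩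

lemma K.mul_def (x y : K) : x * y = ⟨x.v + rhoc x.c y.v, x.c + y.c⟩ := rfl
lemma K.one_def : (1 : K) = ⟨0, 0⟩ := rfl
lemma K.inv_def (x : K) : x⁻¹ = ⟨-(rhoc (-x.c) x.v), -x.c⟩ := rfl

instance : Group K :=
  Group.ofLeftAxioms
    (fun x y z => by
      simp only [K.mul_def, K.mk.injEq, rhoc_vadd, ← rhoc_add_val]
      exact ⟨by abel, by ring⟩)
    (fun x => by simp [K.mul_def, K.one_def, rhoc_zero])
    (fun x => by
      simp only [K.inv_def, K.mul_def, K.one_def, K.mk.injEq]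
      exact ⟨by abel, by ring⟩)

end Stmt9

namespace Stmt9

open Multiplicative

/-- the abelianization map on `K` -/
def psiK : K →* Multiplicative (ZMod 3 × ZMod 3) :=
  MonoidHom.mk' (fun x => ofAdd (((x.v.1 + x.v.2 : ℤ) : ZMod 3), x.c))
    (by
      intro x y
      simp only [K.mul_def, ← ofAdd_add]
      congr 1
      obtain ⟨k, hk⟩ : ∃ k : ℤ, (rhoc x.c y.v).1 + (rhoc x.c y.v).2
          = y.v.1 + y.v.2 + 3 * k := by
        rcases zmod3_cases x.c with h | h | h <;> rw [h] <;>
          simp (config := { decide := true }) only [rhoc, if_true, if_false]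
        · exact ⟨0, by ring⟩
        · exact ⟨-y.v.1, by ring⟩
        · exact ⟨-y.v.2, by ring⟩
      refine Prod.ext ?_ rfl
      simp only [Prod.fst_add, Prod.snd_add]
      push_cast
      have hk' : ((rhoc x.c y.v).1 : ZMod 3) + ((rhoc x.c y.v).2 : ZMod 3)
          = (y.v.1 : ZMod 3) + (y.v.2 : ZMod 3) + 3 * (k : ZMod 3) := by
        exact_mod_cast congrArg (fun z : ℤ => (z : ZMod 3)) hk
      have h3 : (3 : ZMod 3) = 0 := by decide
      rw [h3, zero_mul, add_zero] at hk'
      linear_combination hk')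

def iotaK : Multiplicative (ℤ × ℤ) →* K :=
  MonoidHom.mk' (fun v => ⟨v.toAdd, 0⟩)
    (fun v w => by simp [K.mul_def, rhoc_zero])

def z₀ : K := ⟨0, 1⟩
def x₀ : K := ⟨(1, 0), 0⟩
def y₀ : K := ⟨(0, 1), 0⟩

lemma iotaK_zpow (v : ℤ × ℤ) (n : ℤ) :
    (iotaK (ofAdd v)) ^ n = iotaK (ofAdd (n • v)) := by
  rw [ofAdd_zsmul, map_zpow]

lemma z₀_pow (k : ℕ) : z₀ ^ k = ⟨0, (k : ZMod 3)⟩ := by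
  induction k with
  | zero => rfl
  | succ k ih =>
      rw [pow_succ, ih, K.mul_def, z₀]
      simp [rhoc_zero_vec]

lemma K.decomp (x : K) : x = iotaK (ofAdd x.v) * z₀ ^ x.c.val := by
  rw [z₀_pow, K.mul_def]
  simp [iotaK, rhoc_zero_vec, ZMod.natCast_val, ZMod.cast_id]

open scoped commutatorElement in
lemma mem_commutator_of (m n : ℤ) (h : (3:ℤ) ∣ m + n) :
    (⟨(m, n), 0⟩ : K) ∈ commutator K := by
  obtain ⟨k, hk⟩ := h
  have hc1 : ⁅z₀, y₀⁆ = iotaK (ofAdd (1, -1)) := by decide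
  have hc2 : ⁅z₀, x₀⁆ = iotaK (ofAdd (-2, -1)) := by decide
  have key : (⟨(m, n), 0⟩ : K) = ⁅z₀, y₀⁆ ^ (m - 2*k) * ⁅z₀, x₀⁆ ^ (-k) := by
    rw [hc1, hc2, iotaK_zpow, iotaK_zpow, ← map_mul, ← ofAdd_add]
    show _ = (⟨_ + rhoc 0 _, 0⟩ : K)
    rw [rhoc_zero]
    ext
    · show m = (m - 2*k) * 1 + (-k) * (-2); ring
    · show n = (m - 2*k) * (-1) + (-k) * (-1); omega
    · rfl
  rw [key]
  exact mul_mem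
    (zpow_mem (Subgroup.commutator_mem_commutator (Subgroup.mem_top _) (Subgroup.mem_top _)) _)
    (zpow_mem (Subgroup.commutator_mem_commutator (Subgroup.mem_top _) (Subgroup.mem_top _)) _)

end Stmt9

namespace Stmt9

open Multiplicative

lemma psiK_lift_bijective :
    Function.Bijective (Abelianization.lift psiK) := by
  constructor
  · rw [injective_iff_map_eq_one]
    intro g hg
    obtain ⟨x, rfl⟩ : ∃ x, Abelianization.of x = g := by
      obtain ⟨x, hx⟩ := Quot.exists_rep g
      exact ⟨x, by rw [← hx]; rfl⟩
    rw [Abelianization.lift_apply_of] at hg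
    obtain ⟨⟨m, n⟩, c⟩ := x
    have h := congrArg Multiplicative.toAdd hg
    simp only [psiK, MonoidHom.mk'_apply, toAdd_ofAdd, toAdd_one, Prod.mk_eq_zero] at h
    obtain ⟨h1, h2⟩ := h
    have hdvd : (3:ℤ) ∣ m + n := (ZMod.intCast_zmod_eq_zero_iff_dvd _ 3).mp h1
    show QuotientGroup.mk _ = 1
    apply (QuotientGroup.eq_one_iff _).mpr
    subst h2
    exact mem_commutator_of m n hdvd
  · intro g
    refine ⟨Abelianization.of ⟨((g.toAdd.1.val : ℤ), 0), g.toAdd.2⟩, ?_⟩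
    rw [Abelianization.lift_apply_of]
    show ofAdd _ = g
    rw [← ofAdd_toAdd g]
    congr 1
    refine Prod.ext ?_ rfl
    show (((g.toAdd.1.val : ℤ) + 0 : ℤ) : ZMod 3) = g.toAdd.1
    simp [ZMod.natCast_val, ZMod.cast_id]

/-- the abelianization of `K` -/
noncomputable def abKEquiv : Abelianization K ≃* Multiplicative (ZMod 3 × ZMod 3) :=
  MulEquiv.ofBijective (Abelianization.lift psiK) psiK_lift_bijective

end Stmt9

namespace Stmt9
open scoped MatrixGroups
variable {ℓ : ℂ}


def Mx (ℓ : ℂ) (x : K) : Matrix (Fin 2) (Fin 2) ℂ :=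
  !![ℓ ^ x.c.val, ((x.v.1 : ℂ) + (x.v.2 : ℂ) * ℓ) * ℓ ^ (2 * x.c.val); 0, ℓ ^ (2 * x.c.val)]

lemma pow_mod3 (h3 : ℓ ^ 3 = 1) (m : ℕ) : ℓ ^ m = ℓ ^ (m % 3) := by
  conv_lhs => rw [← Nat.div_add_mod m 3]
  rw [pow_add, pow_mul, h3, one_pow, one_mul]

lemma hu (h3 : ℓ ^ 3 = 1) (a b : ZMod 3) :
    ℓ ^ ((a + b).val) = ℓ ^ a.val * ℓ ^ b.val := by
  rw [← pow_add, pow_mod3 h3 ((a+b).val), pow_mod3 h3 (a.val + b.val)]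
  congr 1
  have := ZMod.val_add a b
  omega

lemma hw (h3 : ℓ ^ 3 = 1) (a b : ZMod 3) :
    ℓ ^ (2 * (a + b).val) = ℓ ^ (2 * a.val) * ℓ ^ (2 * b.val) := by
  rw [← pow_add, pow_mod3 h3 (2 * (a+b).val), pow_mod3 h3 (2 * a.val + 2 * b.val)]
  congr 1
  have := ZMod.val_add a b
  omega

lemma hsq (h3 : ℓ ^ 3 = 1) (a : ZMod 3) :
    ℓ ^ (2 * a.val) * ℓ ^ (2 * a.val) = ℓ ^ a.val := by
  rw [← pow_add, pow_mod3 h3 (2*a.val + 2*a.val), pow_mod3 h3 a.val]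
  congr 1
  have := a.val_lt
  omega

lemma hF4 (h3 : ℓ ^ 3 = 1) (h1 : ℓ ^ 2 + ℓ + 1 = 0) (c : ZMod 3) (v : ℤ × ℤ) :
    ((rhoc c v).1 : ℂ) + ((rhoc c v).2 : ℂ) * ℓ
      = ℓ ^ (2 * c.val) * ((v.1 : ℂ) + (v.2 : ℂ) * ℓ) := by
  rcases zmod3_cases c with rfl | rfl | rfl <;>
    simp (config := { decide := true }) only [rhoc, if_true, if_false]
  · norm_num
  · show _ = ℓ ^ (2 * 1) * _
    push_cast
    linear_combination (-(v.1 : ℂ)) * h1 - (v.2 : ℂ) * h3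
  · show _ = ℓ ^ (2 * 2) * _
    push_cast
    linear_combination (-(v.1 : ℂ) * ℓ - (v.2 : ℂ) * ℓ^2) * h3 - (v.2 : ℂ) * h1

lemma Mx_mul (h3 : ℓ ^ 3 = 1) (h1 : ℓ ^ 2 + ℓ + 1 = 0) (x y : K) :
    Mx ℓ (x * y) = Mx ℓ x * Mx ℓ y := by
  have e1 := hu h3 x.c y.c
  have e2 := hw h3 x.c y.c
  have e3 := hsq h3 x.c
  have e4 := hF4 h3 h1 x.c y.v
  push_cast at e4
  ext i j
  fin_cases i <;> fin_cases j <;>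
    simp [Mx, K.mul_def, Matrix.mul_apply, Fin.sum_univ_two, e1, e2] <;>
    push_cast
  linear_combination (ℓ ^ (2 * x.c.val) * ℓ ^ (2 * y.c.val)) * e4
      + (((y.v.1:ℂ) + (y.v.2:ℂ) * ℓ) * ℓ ^ (2 * y.c.val)) * e3

lemma det_Mx (h3 : ℓ ^ 3 = 1) (x : K) : (Mx ℓ x).det = 1 := by
  have h : ℓ ^ x.c.val * ℓ ^ (2 * x.c.val) = 1 := by
    rw [← pow_add]
    have h' : x.c.val + 2 * x.c.val = 3 * x.c.val := by ring
    rw [h', pow_mul, h3, one_pow]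
  simp [Mx, Matrix.det_fin_two_of, h]

end Stmt9

namespace Stmt9

open Multiplicative
open scoped MatrixGroups

variable {ℓ : ℂ}

/-- `Mx` as an element of `SL(2, ℂ)`. -/
def PhiSL (ℓ : ℂ) (h3 : ℓ ^ 3 = 1) (x : K) : SL(2, ℂ) := ⟨Mx ℓ x, det_Mx h3 x⟩

/-- The homomorphism `K →* PSL(2, ℂ)`. -/
def PhiK (h3 : ℓ ^ 3 = 1) (h1 : ℓ ^ 2 + ℓ + 1 = 0) : K →* PSL(2, ℂ) :=
  MonoidHom.mk' (fun x => (QuotientGroup.mk (PhiSL ℓ h3 x) : PSL(2, ℂ)))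
    (fun x y => by
      have hSL : PhiSL ℓ h3 (x * y) = PhiSL ℓ h3 x * PhiSL ℓ h3 y := by
        apply Subtype.ext
        show Mx ℓ (x * y) = _
        rw [Mx_mul h3 h1 x y]
        rfl
      show (QuotientGroup.mk (PhiSL ℓ h3 (x * y)) : PSL(2, ℂ)) = _
      rw [hSL, QuotientGroup.mk_mul])

lemma ell_ne_zero (h3 : ℓ ^ 3 = 1) : ℓ ≠ 0 := by
  intro h; rw [h] at h3; norm_num at h3

lemma ell_ne_one (h1 : ℓ ^ 2 + ℓ + 1 = 0) : ℓ ≠ 1 := by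
  intro h; rw [h] at h1; norm_num at h1

lemma ell_sq_ne_one (h3 : ℓ ^ 3 = 1) (h1 : ℓ ^ 2 + ℓ + 1 = 0) : ℓ ^ 2 ≠ 1 := by
  intro h
  apply ell_ne_one h1
  have h' : ℓ ^ 3 = ℓ * ℓ ^ 2 := by ring
  rw [h, mul_one] at h'
  calc ℓ = ℓ ^ 3 := h'.symm
    _ = 1 := h3

lemma ell_im_ne_zero (h1 : ℓ ^ 2 + ℓ + 1 = 0) : ℓ.im ≠ 0 := by
  intro h
  have hre := congrArg Complex.re h1
  simp only [Complex.add_re, Complex.one_re, Complex.zero_re, pow_two, Complex.mul_re, h,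
    mul_zero, zero_mul, sub_zero] at hre
  nlinarith [hre]

lemma PhiK_injective (h3 : ℓ ^ 3 = 1) (h1 : ℓ ^ 2 + ℓ + 1 = 0) :
    Function.Injective (PhiK h3 h1) := by
  rw [injective_iff_map_eq_one]
  intro x hx
  have hx' : PhiSL ℓ h3 x ∈ Subgroup.center (SL(2, ℂ)) :=
    (QuotientGroup.eq_one_iff _).mp hx
  obtain ⟨s, _, hs⟩ := Matrix.SpecialLinearGroup.mem_center_iff.mp hx'
  have hs' : Matrix.scalar (Fin 2) s = Mx ℓ x := hs
  have e01 : ((x.v.1 : ℂ) + (x.v.2 : ℂ) * ℓ) * ℓ ^ (2 * x.c.val) = 0 := by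
    have := congrArg (fun M => M 0 1) hs'
    simpa [Mx, Matrix.scalar_apply, Matrix.diagonal_apply_ne] using this.symm
  have e00 : s = ℓ ^ x.c.val := by
    have := congrArg (fun M => M 0 0) hs'
    simpa [Mx, Matrix.scalar_apply] using this
  have e11 : s = ℓ ^ (2 * x.c.val) := by
    have := congrArg (fun M => M 1 1) hs'
    simpa [Mx, Matrix.scalar_apply] using this
  have hpne : ℓ ^ (2 * x.c.val) ≠ 0 := pow_ne_zero _ (ell_ne_zero h3)
  have hv0 : (x.v.1 : ℂ) + (x.v.2 : ℂ) * ℓ = 0 := by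
    rcases mul_eq_zero.mp e01 with h | h
    · exact h
    · exact absurd h hpne
  have hn : x.v.2 = 0 := by
    have him := congrArg Complex.im hv0
    simp only [Complex.add_im, Complex.intCast_im, Complex.mul_im, Complex.intCast_re,
      Complex.intCast_im, Complex.zero_im, zero_mul, add_zero, zero_add] at him
    have : (x.v.2 : ℝ) = 0 := by
      rcases mul_eq_zero.mp (by linarith [him] : (x.v.2 : ℝ) * ℓ.im = 0) with h | h
      · exact h
      · exact absurd h (ell_im_ne_zero h1)
    exact_mod_cast this
  have hm : x.v.1 = 0 := by
    have hre := hv0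
    rw [hn] at hre
    simp at hre
    exact_mod_cast hre
  have hc : x.c = 0 := by
    have hpow : ℓ ^ x.c.val = 1 := by
      have h2 : ℓ ^ x.c.val * ℓ ^ x.c.val = ℓ ^ (2 * x.c.val) := by
        rw [← pow_add]; congr 1; ring
      have : ℓ ^ x.c.val * ℓ ^ x.c.val = ℓ ^ x.c.val * 1 := by
        rw [h2, ← e11, e00, mul_one]
      exact (mul_left_cancel₀ (pow_ne_zero _ (ell_ne_zero h3)) this)
    rcases zmod3_cases x.c with h | h | h
    · exact h
    · rw [h] at hpow
      norm_num [ZMod.val_one] at hpow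
      exact absurd hpow (ell_ne_one h1)
    · rw [h] at hpow
      have : ℓ ^ (2 : ZMod 3).val = ℓ ^ 2 := by norm_num [ZMod.val]; rfl
      rw [this] at hpow
      exact absurd hpow (ell_sq_ne_one h3 h1)
  ext
  · exact hm
  · exact hn
  · exact hc

end Stmt9

open scoped MatrixGroups
open Stmt9 Multiplicative


/-- For `ℓ = e^{2πi/3}`, the subgroup of `PSL(2, ℂ)` generated by the
images of `!![1, 1; 0, 1]` and `!![ℓ, 0; 0, ℓ⁻¹]` has abelianization `ℤ/3ℤ × ℤ/3ℤ`. -/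
theorem stmt_9 (ℓ : ℂ) (hℓ : ℓ = Complex.exp (2 * Real.pi * Complex.I / 3))
    (T R : SL(2, ℂ))
    (hT : (T : Matrix (Fin 2) (Fin 2) ℂ) = !![1, 1; 0, 1])
    (hR : (R : Matrix (Fin 2) (Fin 2) ℂ) = !![ℓ, 0; 0, ℓ⁻¹])
    (t r : PSL(2, ℂ))
    (ht : t = (QuotientGroup.mk T : PSL(2, ℂ)))
    (hr : r = (QuotientGroup.mk R : PSL(2, ℂ))) :
    Nonempty (Abelianization (Subgroup.closure ({t, r} : Set PSL(2, ℂ))) ≃*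
      Multiplicative (ZMod 3 × ZMod 3)) := by
  have h3 : ℓ ^ 3 = 1 := by
    rw [hℓ, ← Complex.exp_nat_mul]
    rw [show ((3 : ℕ) : ℂ) * (2 * Real.pi * Complex.I / 3) = 2 * Real.pi * Complex.I by
      push_cast; ring]
    exact Complex.exp_two_pi_mul_I
  have him : ℓ.im ≠ 0 := by
    rw [hℓ, show (2 * (Real.pi : ℂ) * Complex.I / 3) = ((2 * Real.pi / 3 : ℝ) : ℂ) * Complex.I by
      push_cast; ring]
    rw [Complex.exp_ofReal_mul_I_im]
    have h0 : 0 < 2 * Real.pi / 3 := by positivity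
    have hπlt : 2 * Real.pi / 3 < Real.pi := by nlinarith [Real.pi_pos]
    exact ne_of_gt (Real.sin_pos_of_pos_of_lt_pi h0 hπlt)
  have hne1 : ℓ ≠ 1 := fun h => him (by rw [h]; simp)
  have h1 : ℓ ^ 2 + ℓ + 1 = 0 := by
    have hfac : (ℓ - 1) * (ℓ ^ 2 + ℓ + 1) = 0 := by linear_combination h3
    rcases mul_eq_zero.mp hfac with h | h
    · exact absurd (sub_eq_zero.mp h) hne1
    · exact h
  have hT' : T = PhiSL ℓ h3 x₀ := by
    apply Subtype.ext
    rw [hT]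
    show _ = Mx ℓ x₀
    ext i j
    fin_cases i <;> fin_cases j <;> simp [Mx, x₀]
  have hR' : R = PhiSL ℓ h3 z₀ := by
    apply Subtype.ext
    rw [hR]
    show _ = Mx ℓ z₀
    have hinv : ℓ⁻¹ = ℓ ^ 2 := by
      refine inv_eq_of_mul_eq_one_right ?_
      calc ℓ * ℓ ^ 2 = ℓ ^ 3 := by ring
        _ = 1 := h3
    ext i j
    fin_cases i <;> fin_cases j <;>
      simp [Mx, z₀, hinv, ZMod.val_one]
  have hΦx₀ : PhiK h3 h1 x₀ = t := by rw [ht, hT']; rfl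
  have hΦz₀ : PhiK h3 h1 z₀ = r := by rw [hr, hR']; rfl
  have hy₀K : (y₀ : K) = z₀⁻¹ * x₀ * z₀ := by decide
  have hΦy₀ : PhiK h3 h1 y₀ = r⁻¹ * t * r := by
    rw [hy₀K, map_mul, map_mul, map_inv, hΦx₀, hΦz₀]
  have hxK : ∀ x : K, x = x₀ ^ x.v.1 * y₀ ^ x.v.2 * z₀ ^ x.c.val := by
    intro x
    have h1'' : ∀ m n : ℤ, iotaK (ofAdd ((m, n) : ℤ × ℤ)) = x₀ ^ m * y₀ ^ n := by
      intro m n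
      rw [show ((m, n) : ℤ × ℤ) = m • ((1:ℤ), (0:ℤ)) + n • ((0:ℤ), (1:ℤ)) by ext <;> simp]
      rw [ofAdd_add, map_mul, ← iotaK_zpow, ← iotaK_zpow]
      rfl
    have h1' : iotaK (ofAdd x.v) = x₀ ^ x.v.1 * y₀ ^ x.v.2 := by
      have := h1'' x.v.1 x.v.2
      rwa [Prod.mk.eta] at this
    calc x = iotaK (ofAdd x.v) * z₀ ^ x.c.val := K.decomp x
      _ = x₀ ^ x.v.1 * y₀ ^ x.v.2 * z₀ ^ x.c.val := by rw [h1']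
  have hrange : (PhiK h3 h1).range = Subgroup.closure ({t, r} : Set PSL(2, ℂ)) := by
    apply le_antisymm
    · rintro g ⟨x, rfl⟩
      have htmem : t ∈ Subgroup.closure ({t, r} : Set PSL(2, ℂ)) :=
        Subgroup.subset_closure (by simp)
      have hrmem : r ∈ Subgroup.closure ({t, r} : Set PSL(2, ℂ)) :=
        Subgroup.subset_closure (by simp)
      rw [show x = x₀ ^ x.v.1 * y₀ ^ x.v.2 * z₀ ^ x.c.val from hxK x]
      rw [map_mul, map_mul, map_zpow, map_zpow, map_pow, hΦx₀, hΦz₀, hΦy₀]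
      exact mul_mem (mul_mem (zpow_mem htmem _)
        (zpow_mem (mul_mem (mul_mem (inv_mem hrmem) htmem) hrmem) _)) (pow_mem hrmem _)
    · rw [Subgroup.closure_le]
      rintro g hg
      simp only [Set.mem_insert_iff, Set.mem_singleton_iff] at hg
      rcases hg with rfl | rfl
      · exact ⟨x₀, hΦx₀⟩
      · exact ⟨z₀, hΦz₀⟩
  exact ⟨(((MonoidHom.ofInjective (PhiK_injective h3 h1)).trans
      (MulEquiv.subgroupCongr hrange)).symm.abelianizationCongr).trans abKEquiv⟩
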